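/- Let ⟨A,∧,∨,→,∼,1⟩ be a Nelson algebra. Then for all x,y,z in A: x↣(x↣(y↣(y↣z))) = (x∧y)↣((x∧y)↣z), where x↣y:=(x→y)∧(∼y→∼x). -/

import Mathlib

/-- A Nelson algebra ⟨A,∧,∨,→,∼,1⟩ of type (2,2,2,1,0). -/
structure NelsonAlgebra (A : Type*) where
  meet : A → A → A
  join : A → A → A
  imp : A → A → A
  neg : A → A
  one : A
  n1 : ∀ x y, meet x (join x y) = x
  n2 : ∀ x y z, meet x (join y z) = join (meet z x) (meet y x)
  n3 : ∀ x, neg (neg x) = x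
  n4 : ∀ x y, neg (meet x y) = join (neg x) (neg y)
  n5 : ∀ x y, meet x (neg x) = meet (meet x (neg x)) (join y (neg y))
  n6 : ∀ x, imp x x = one
  n7 : ∀ x y, meet x (imp x y) = meet x (join (neg x) y)
  n8 : ∀ x y z, imp (meet x y) z = imp x (imp y z)

namespace NelsonAlgebra

variable {A : Type*} (N : NelsonAlgebra A)

/- ## Phase A : the underlying distributive lattice (Sholander) -/

lemma r1 (x y : A) : N.join (N.meet y x) (N.meet x x) = x := by
  rw [← N.n2 x x y, N.n1]

lemma r2 (x : A) : N.join (N.meet x x) (N.meet x x) = x := N.r1 x x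

lemma r3 (x : A) : N.meet (N.meet x x) x = N.meet x x := by
  have h := N.n1 (N.meet x x) (N.meet x x)
  rwa [N.r2] at h

lemma meet_idem (x : A) : N.meet x x = x := by
  have h := N.n2 x (N.meet x x) (N.meet x x)
  rwa [N.r2, N.r3, N.r2] at h

lemma join_idem (x : A) : N.join x x = x := by
  have h := N.r2 x
  rwa [N.meet_idem] at h

lemma r6 (x y : A) : N.join (N.meet y x) x = x := by
  have h := N.r1 x y
  rwa [N.meet_idem] at h

lemma meet_comm (x y : A) : N.meet x y = N.meet y x := by
  have h := N.n2 x y y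
  rwa [N.join_idem, N.join_idem] at h

lemma neg_join (x y : A) : N.neg (N.join x y) = N.meet (N.neg x) (N.neg y) := by
  conv_lhs => rw [← N.n3 x, ← N.n3 y, ← N.n4, N.n3]

lemma join_comm (x y : A) : N.join x y = N.join y x := by
  rw [← N.n3 (N.join x y), N.neg_join, N.meet_comm, ← N.neg_join, N.n3]

lemma absorb2 (x y : A) : N.join x (N.meet x y) = x := by
  have h : N.neg (N.join x (N.meet x y)) = N.neg x := by
    rw [N.neg_join, N.n4, N.n1]
  rw [← N.n3 (N.join x (N.meet x y)), h, N.n3]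

lemma cons1 {a b : A} (h : N.meet a b = a) : N.join a b = b := by
  rw [← h, N.r6]

lemma cons2 {a b : A} (h : N.join a b = b) : N.meet a b = a := by
  rw [← h, N.n1]

lemma distrib' (x y z : A) : N.meet x (N.join y z) = N.join (N.meet x z) (N.meet x y) := by
  rw [N.n2, N.meet_comm z x, N.meet_comm y x]

lemma jdistrib (x y z : A) : N.join x (N.meet y z) = N.meet (N.join x z) (N.join x y) := by
  have h : N.neg (N.join x (N.meet y z)) = N.neg (N.meet (N.join x z) (N.join x y)) := by
    rw [N.neg_join, N.n4, N.distrib', ← N.neg_join, ← N.neg_join, ← N.n4]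
  rw [← N.n3 (N.join x (N.meet y z)), h, N.n3]

lemma ltrans {a b c : A} (h1 : N.meet a b = a) (h2 : N.meet b c = b) : N.meet a c = a := by
  apply N.cons2
  have hbc : N.join b c = c := N.cons1 h2
  calc N.join a c = N.join c a := N.join_comm a c
    _ = N.join c (N.meet a b) := by rw [h1]
    _ = N.meet (N.join c b) (N.join c a) := N.jdistrib c a b
    _ = N.meet c (N.join c a) := by rw [N.join_comm c b, hbc]
    _ = c := N.n1 c a

lemma inf_le_left' (a b : A) : N.meet (N.meet a b) a = N.meet a b := by
  have h2 : N.join (N.meet a b) a = a := by rw [N.meet_comm]; exact N.r6 a b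
  have h := N.n1 (N.meet a b) a
  rwa [h2] at h

lemma inf_le_right' (a b : A) : N.meet (N.meet a b) b = N.meet a b := by
  have h := N.n1 (N.meet a b) b
  rwa [N.r6 b a] at h

lemma le_inf' {a b c : A} (h1 : N.meet c a = c) (h2 : N.meet c b = c) :
    N.meet c (N.meet a b) = c := by
  apply N.cons2
  calc N.join c (N.meet a b) = N.meet (N.join c b) (N.join c a) := N.jdistrib c a b
    _ = N.meet b a := by rw [N.cons1 h1, N.cons1 h2]
    _ = N.meet a b := N.meet_comm b a

lemma meet_assoc (a b c : A) : N.meet (N.meet a b) c = N.meet a (N.meet b c) := by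
  have u_a : N.meet (N.meet (N.meet a b) c) a = N.meet (N.meet a b) c :=
    N.ltrans (N.inf_le_left' (N.meet a b) c) (N.inf_le_left' a b)
  have u_b : N.meet (N.meet (N.meet a b) c) b = N.meet (N.meet a b) c :=
    N.ltrans (N.inf_le_left' (N.meet a b) c) (N.inf_le_right' a b)
  have u_c := N.inf_le_right' (N.meet a b) c
  have v_b : N.meet (N.meet a (N.meet b c)) b = N.meet a (N.meet b c) :=
    N.ltrans (N.inf_le_right' a (N.meet b c)) (N.inf_le_left' b c)
  have v_c : N.meet (N.meet a (N.meet b c)) c = N.meet a (N.meet b c) :=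
    N.ltrans (N.inf_le_right' a (N.meet b c)) (N.inf_le_right' b c)
  have v_a := N.inf_le_left' a (N.meet b c)
  have h1 : N.meet (N.meet (N.meet a b) c) (N.meet a (N.meet b c)) = N.meet (N.meet a b) c :=
    N.le_inf' u_a (N.le_inf' u_b u_c)
  have h2 : N.meet (N.meet a (N.meet b c)) (N.meet (N.meet a b) c) = N.meet a (N.meet b c) :=
    N.le_inf' (N.le_inf' v_a v_b) v_c
  rw [← h1, N.meet_comm, h2]

lemma join_assoc (a b c : A) : N.join (N.join a b) c = N.join a (N.join b c) := by
  rw [← N.n3 (N.join (N.join a b) c), N.neg_join, N.neg_join, N.meet_assoc,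
    ← N.neg_join, ← N.neg_join, N.n3]

/- ## The lattice instance on a type synonym -/

def Car (_N : NelsonAlgebra A) : Type _ := A

instance instLat : Lattice N.Car :=
  @Lattice.mk' _ ⟨N.join⟩ ⟨N.meet⟩ N.join_comm N.join_assoc N.meet_comm N.meet_assoc
    (fun a b => N.absorb2 a b) (fun a b => N.n1 a b)

instance : DistribLattice N.Car :=
  DistribLattice.ofInfSupLe (fun a b c => le_of_eq (by
    show N.meet a (N.join b c) = N.join (N.meet a b) (N.meet a c)
    exact (N.distrib' a b c).trans (N.join_comm _ _)))


/- ## Phase B : implication theory -/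

def ai (a b : N.Car) : N.Car := N.imp a b
def an (a : N.Car) : N.Car := N.neg a
def uno : N.Car := N.one

lemma nn (a : N.Car) : N.an (N.an a) = a := N.n3 a
lemma nm (a b : N.Car) : N.an (a ⊓ b) = N.an a ⊔ N.an b := N.n4 a b
lemma njn (a b : N.Car) : N.an (a ⊔ b) = N.an a ⊓ N.an b := N.neg_join a b
lemma i_self (a : N.Car) : N.ai a a = N.uno := N.n6 a
lemma m_i (a b : N.Car) : a ⊓ N.ai a b = a ⊓ (N.an a ⊔ b) := N.n7 a b
lemma curry (a b c : N.Car) : N.ai (a ⊓ b) c = N.ai a (N.ai b c) := N.n8 a b c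
lemma kle (a b : N.Car) : a ⊓ N.an a ≤ b ⊔ N.an b := inf_eq_left.mp (N.n5 a b).symm

lemma an_anti {a b : N.Car} (h : a ≤ b) : N.an b ≤ N.an a := by
  have h2 : N.an (a ⊓ b) = N.an a := congrArg N.an (inf_eq_left.mpr h)
  rw [N.nm] at h2
  exact sup_eq_left.mp h2

lemma le_one (a : N.Car) : a ≤ N.uno := by
  have h := N.m_i a a
  rw [N.i_self] at h
  have h2 : a ⊓ N.uno = a := by rw [h]; exact inf_eq_left.mpr le_sup_right
  exact inf_eq_left.mp h2

lemma inf_one (a : N.Car) : a ⊓ N.uno = a := inf_eq_left.mpr (N.le_one a)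

lemma curry2 (a b : N.Car) : N.ai a (N.ai a b) = N.ai a b := by rw [← N.curry, inf_idem]

lemma ai_one (a : N.Car) : N.ai a N.uno = N.uno := by
  conv_lhs => rw [← N.i_self a]
  rw [N.curry2, N.i_self]

lemma pi1 (a b : N.Car) : N.ai (a ⊓ b) b = N.uno := by
  rw [N.curry, N.i_self, N.ai_one]

lemma E_le_ai (a b : N.Car) : a ⊓ N.an a ≤ N.ai a b := by
  have h1 : N.ai (a ⊔ N.an a) (N.ai a b) = N.ai a b := by
    rw [← N.curry, inf_eq_right.mpr (le_sup_left : a ≤ a ⊔ N.an a)]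
  have h2 := N.m_i (a ⊔ N.an a) (N.ai a b)
  rw [h1] at h2
  have hnc : N.an (a ⊔ N.an a) = N.an a ⊓ a := by rw [N.njn, N.nn]
  have hlec : N.an (a ⊔ N.an a) ≤ a ⊔ N.an a := by
    rw [hnc]; exact le_trans inf_le_right le_sup_left
  rw [inf_sup_left, inf_eq_right.mpr hlec] at h2
  have h4 : N.an (a ⊔ N.an a) ≤ (a ⊔ N.an a) ⊓ N.ai a b := sup_eq_right.mp h2.symm
  calc a ⊓ N.an a = N.an (a ⊔ N.an a) := by rw [hnc, inf_comm]
    _ ≤ _ := le_trans h4 inf_le_right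

lemma omega (a b : N.Car) : N.ai (a ⊓ N.an a) b = N.uno := by
  have hEn : (a ⊓ N.an a) ⊓ N.an (a ⊓ N.an a) = a ⊓ N.an a := by
    apply inf_eq_left.mpr
    rw [N.nm, N.nn]
    exact le_trans inf_le_left le_sup_right
  have hEle : a ⊓ N.an a ≤ N.ai (a ⊓ N.an a) b := by
    have h := N.E_le_ai (a ⊓ N.an a) b
    rwa [hEn] at h
  have h1 : N.ai (N.ai (a ⊓ N.an a) b) (N.ai (a ⊓ N.an a) b) = N.uno := N.i_self _
  rw [← N.curry, inf_eq_right.mpr hEle] at h1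
  exact h1

lemma nle_P (a b : N.Car) : N.an a ≤ N.ai a b := by
  have h1 : N.ai (N.an a) (N.ai a b) = N.uno := by
    rw [← N.curry, inf_comm (N.an a) a]; exact N.omega a b
  have h2 := N.m_i (N.an a) (N.ai a b)
  rw [h1, N.inf_one, N.nn, inf_sup_left] at h2
  have h3 : N.an a ⊓ a ≤ N.an a ⊓ N.ai a b := by
    apply le_inf inf_le_left
    rw [inf_comm]
    exact N.E_le_ai a b
  rw [sup_eq_right.mpr h3] at h2
  exact le_trans (le_of_eq h2) inf_le_right

lemma le_P2 (a b : N.Car) : b ≤ N.ai a b := by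
  have h1 : N.ai b (N.ai a b) = N.uno := by
    rw [← N.curry, inf_comm b a]; exact N.pi1 a b
  have h2 := N.m_i b (N.ai a b)
  rw [h1, N.inf_one, inf_sup_left] at h2
  have hEb : b ⊓ N.an b ≤ N.ai a b := by
    have hsplit : b ⊓ N.an b = ((b ⊓ N.an b) ⊓ a) ⊔ ((b ⊓ N.an b) ⊓ N.an a) := by
      rw [← inf_sup_left, inf_eq_left.mpr (N.kle b a)]
    rw [hsplit]
    apply sup_le
    · have h5 : (b ⊓ N.an b) ⊓ a ≤ a ⊓ (N.an a ⊔ b) := by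
        apply le_inf inf_le_right
        exact le_trans (inf_le_of_left_le inf_le_left) le_sup_right
      rw [← N.m_i] at h5
      exact le_trans h5 inf_le_right
    · exact le_trans inf_le_right (N.nle_P a b)
  calc b = (b ⊓ N.an b) ⊔ (b ⊓ N.ai a b) := h2
    _ ≤ _ := sup_le hEb inf_le_right

lemma nle_sup_P (a b : N.Car) : N.an a ⊔ b ≤ N.ai a b :=
  sup_le (N.nle_P a b) (N.le_P2 a b)

lemma crit {c b : N.Car} (h : c ≤ N.an c ⊔ b) : N.ai c b = N.uno := by
  have h2 := N.m_i c b
  rw [inf_eq_left.mpr h] at h2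
  have hle : c ≤ N.ai c b := inf_eq_left.mp h2
  have h1 : N.ai (N.ai c b) (N.ai c b) = N.uno := N.i_self _
  rw [← N.curry, inf_eq_right.mpr hle] at h1
  exact h1

lemma adj_mp {t a b : N.Car} (h : t ≤ N.ai a b) : t ⊓ a ≤ N.an a ⊔ b :=
  calc t ⊓ a ≤ a ⊓ N.ai a b := le_inf inf_le_right (le_trans inf_le_left h)
    _ = a ⊓ (N.an a ⊔ b) := N.m_i a b
    _ ≤ _ := inf_le_right

lemma adj {t a b : N.Car} (h : t ⊓ a ≤ N.an a ⊔ b) : t ≤ N.ai a b := by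
  have hcrit : N.ai (t ⊓ a) b = N.uno := by
    apply N.crit
    rw [N.nm]
    exact le_trans h (sup_le_sup_right le_sup_right b)
  rw [N.curry] at hcrit
  have h2 := N.m_i t (N.ai a b)
  rw [hcrit, N.inf_one, inf_sup_left] at h2
  have hEt : t ⊓ N.an t ≤ N.ai a b := by
    have hsplit : t ⊓ N.an t = ((t ⊓ N.an t) ⊓ a) ⊔ ((t ⊓ N.an t) ⊓ N.an a) := by
      rw [← inf_sup_left, inf_eq_left.mpr (N.kle t a)]
    rw [hsplit]
    apply sup_le
    · have h5 : (t ⊓ N.an t) ⊓ a ≤ a ⊓ (N.an a ⊔ b) := by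
        apply le_inf inf_le_right
        exact le_trans (inf_le_inf_right a inf_le_left) h
      rw [← N.m_i] at h5
      exact le_trans h5 inf_le_right
    · exact le_trans inf_le_right (N.nle_P a b)
  calc t = (t ⊓ N.an t) ⊔ (t ⊓ N.ai a b) := h2
    _ ≤ _ := sup_le hEt inf_le_right


/- ## Phase C : splitting lemmas -/

lemma L1 (a b c : N.Car) : N.ai a (b ⊓ c) = N.ai a b ⊓ N.ai a c := by
  apply le_antisymm
  · apply le_inf
    · exact N.adj (le_trans (N.adj_mp le_rfl) (sup_le_sup_left inf_le_left _))
    · exact N.adj (le_trans (N.adj_mp le_rfl) (sup_le_sup_left inf_le_right _))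
  · apply N.adj
    have h1 : (N.ai a b ⊓ N.ai a c) ⊓ a ≤ N.an a ⊔ b :=
      le_trans (inf_le_inf_right a inf_le_left) (N.adj_mp le_rfl)
    have h2 : (N.ai a b ⊓ N.ai a c) ⊓ a ≤ N.an a ⊔ c :=
      le_trans (inf_le_inf_right a inf_le_right) (N.adj_mp le_rfl)
    calc (N.ai a b ⊓ N.ai a c) ⊓ a ≤ (N.an a ⊔ b) ⊓ (N.an a ⊔ c) := le_inf h1 h2
      _ = N.an a ⊔ (b ⊓ c) := (sup_inf_left _ _ _).symm

lemma M2aux (a b c : N.Car) : (N.ai a c ⊓ N.ai b c) ⊓ a ≤ (N.an a ⊓ N.an b) ⊔ c := by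
  have hD : (a ⊓ N.an a) ⊓ N.ai b c ≤ (N.an a ⊓ N.an b) ⊔ c := by
    have hsplit : (a ⊓ N.an a) ⊓ N.ai b c =
        (((a ⊓ N.an a) ⊓ N.ai b c) ⊓ b) ⊔ (((a ⊓ N.an a) ⊓ N.ai b c) ⊓ N.an b) := by
      rw [← inf_sup_left, inf_eq_left.mpr (le_trans inf_le_left (N.kle a b))]
    rw [hsplit]
    apply sup_le
    · have h8 : ((a ⊓ N.an a) ⊓ N.ai b c) ⊓ b ≤ (b ⊓ (N.an b ⊔ c)) ⊓ (a ⊓ N.an a) := by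
        rw [← N.m_i]
        exact le_inf (le_inf inf_le_right (inf_le_of_left_le inf_le_right))
          (inf_le_of_left_le inf_le_left)
      refine le_trans h8 ?_
      rw [inf_sup_left, inf_sup_right]
      apply sup_le
      · exact le_sup_of_le_left (le_inf (le_trans inf_le_right inf_le_right)
          (le_trans inf_le_left inf_le_right))
      · exact le_sup_of_le_right (le_trans inf_le_left inf_le_right)
    · exact le_sup_of_le_left (le_inf (le_trans inf_le_left (le_trans inf_le_left inf_le_right)) inf_le_right)
  have h9 : (N.ai a c ⊓ N.ai b c) ⊓ a ≤ (a ⊓ (N.an a ⊔ c)) ⊓ N.ai b c := by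
    rw [← N.m_i]
    exact le_inf (le_inf inf_le_right (inf_le_of_left_le inf_le_left))
      (inf_le_of_left_le inf_le_right)
  refine le_trans h9 ?_
  rw [inf_sup_left, inf_sup_right]
  apply sup_le
  · exact hD
  · exact le_sup_of_le_right (le_trans inf_le_left inf_le_right)

lemma M2 (a b c : N.Car) : N.ai (a ⊔ b) c = N.ai a c ⊓ N.ai b c := by
  apply le_antisymm
  · apply le_inf
    · apply N.adj
      calc N.ai (a ⊔ b) c ⊓ a ≤ N.ai (a ⊔ b) c ⊓ (a ⊔ b) := inf_le_inf_left _ le_sup_left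
        _ ≤ N.an (a ⊔ b) ⊔ c := N.adj_mp le_rfl
        _ = (N.an a ⊓ N.an b) ⊔ c := by rw [N.njn]
        _ ≤ N.an a ⊔ c := sup_le_sup_right inf_le_left c
    · apply N.adj
      calc N.ai (a ⊔ b) c ⊓ b ≤ N.ai (a ⊔ b) c ⊓ (a ⊔ b) := inf_le_inf_left _ le_sup_right
        _ ≤ N.an (a ⊔ b) ⊔ c := N.adj_mp le_rfl
        _ = (N.an a ⊓ N.an b) ⊔ c := by rw [N.njn]
        _ ≤ N.an b ⊔ c := sup_le_sup_right inf_le_right c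
  · apply N.adj
    rw [N.njn, inf_sup_left]
    apply sup_le
    · exact N.M2aux a b c
    · have h := N.M2aux b a c
      rw [inf_comm (N.ai b c), inf_comm (N.an b)] at h
      exact h

lemma an_ai_le (a b : N.Car) : N.an (N.ai a b) ≤ a ⊓ N.an b := by
  have h := N.an_anti (N.nle_sup_P a b)
  rwa [N.njn, N.nn] at h

lemma N2 (a b : N.Car) : a ⊓ N.an b ≤ N.an a ⊔ N.an (N.ai a b) := by
  have h := congrArg N.an (N.m_i a b)
  rw [N.nm, N.nm, N.njn, N.nn] at h
  rw [h]
  exact le_sup_right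

lemma M1 (a b t : N.Car) : N.ai (N.an (N.ai a b)) t = N.ai (a ⊓ N.an b) t := by
  apply le_antisymm
  · apply N.adj
    rw [N.nm, N.nn]
    have hsplit : N.ai (N.an (N.ai a b)) t ⊓ (a ⊓ N.an b) =
        ((N.ai (N.an (N.ai a b)) t ⊓ (a ⊓ N.an b)) ⊓ N.an a) ⊔
          ((N.ai (N.an (N.ai a b)) t ⊓ (a ⊓ N.an b)) ⊓ N.an (N.ai a b)) := by
      rw [← inf_sup_left, inf_eq_left.mpr (le_trans inf_le_right (N.N2 a b))]
    rw [hsplit]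
    apply sup_le
    · exact le_trans inf_le_right (le_sup_of_le_left le_sup_left)
    · have h7 : N.ai (N.an (N.ai a b)) t ⊓ N.an (N.ai a b) ≤ N.ai a b ⊔ t := by
        have h := N.adj_mp (le_refl (N.ai (N.an (N.ai a b)) t))
        rwa [N.nn] at h
      have h6 : (N.ai (N.an (N.ai a b)) t ⊓ (a ⊓ N.an b)) ⊓ N.an (N.ai a b) ≤
          (N.ai a b ⊔ t) ⊓ (a ⊓ N.an b) := by
        apply le_inf _ (inf_le_of_left_le inf_le_right)
        exact le_trans (inf_le_inf_right _ inf_le_left) h7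
      refine le_trans h6 ?_
      rw [inf_sup_right]
      apply sup_le
      · have h8 : N.ai a b ⊓ (a ⊓ N.an b) ≤ (a ⊓ (N.an a ⊔ b)) ⊓ N.an b := by
          rw [← N.m_i]
          exact le_inf (le_inf (inf_le_of_right_le inf_le_left) inf_le_left)
            (inf_le_of_right_le inf_le_right)
        refine le_trans h8 ?_
        rw [inf_sup_left, inf_sup_right]
        apply sup_le
        · exact le_sup_of_le_left (le_sup_of_le_left (le_trans inf_le_left inf_le_right))
        · exact le_sup_of_le_left (le_sup_of_le_right (le_trans inf_le_left inf_le_right))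
      · exact le_sup_of_le_right inf_le_left
  · apply N.adj
    rw [N.nn]
    calc N.ai (a ⊓ N.an b) t ⊓ N.an (N.ai a b) ≤ N.ai (a ⊓ N.an b) t ⊓ (a ⊓ N.an b) :=
        inf_le_inf_left _ (N.an_ai_le a b)
      _ ≤ N.an (a ⊓ N.an b) ⊔ t := N.adj_mp le_rfl
      _ = (N.an a ⊔ b) ⊔ t := by rw [N.nm, N.nn]
      _ ≤ N.ai a b ⊔ t := sup_le_sup_right (N.nle_sup_P a b) t

lemma Kk (s t : N.Car) : N.ai (s ⊓ t) (N.an s) = N.ai (s ⊓ t) (N.an (s ⊓ t)) := by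
  have hle : N.an s ≤ N.an (s ⊓ t) := N.an_anti inf_le_left
  apply le_antisymm
  · apply N.adj
    have h := N.adj_mp (le_refl (N.ai (s ⊓ t) (N.an s)))
    rw [sup_eq_left.mpr hle] at h
    exact le_trans h le_sup_left
  · apply N.adj
    have h := N.adj_mp (le_refl (N.ai (s ⊓ t) (N.an (s ⊓ t))))
    rw [sup_idem] at h
    exact le_trans h le_sup_left

/- ## Phase D : assembly -/

def W (a b : N.Car) : N.Car := N.ai a b ⊓ N.ai (N.an b) (N.an a)

lemma sq (a c : N.Car) : N.W a (N.W a c) = N.ai a c ⊓ N.ai (a ⊓ N.an c) (N.an a) := by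
  have part1 : N.ai a (N.W a c) = N.ai a c ⊓ N.ai (a ⊓ N.an c) (N.an a) := by
    show N.ai a (N.ai a c ⊓ N.ai (N.an c) (N.an a)) = _
    rw [N.L1, N.curry2, ← N.curry]
  have part2 : N.ai (N.an (N.W a c)) (N.an a) = N.ai (a ⊓ N.an c) (N.an a) := by
    show N.ai (N.an (N.ai a c ⊓ N.ai (N.an c) (N.an a))) (N.an a) = _
    rw [N.nm, N.M2, N.M1, N.M1, N.nn, inf_comm (N.an c) a, inf_idem]
  show N.ai a (N.W a c) ⊓ N.ai (N.an (N.W a c)) (N.an a) = _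
  rw [part1, part2, inf_assoc, inf_idem]

lemma main (x y z : N.Car) :
    N.W x (N.W x (N.W y (N.W y z))) = N.W (x ⊓ y) (N.W (x ⊓ y) z) := by
  rw [N.sq y z, N.sq x (N.ai y z ⊓ N.ai (y ⊓ N.an z) (N.an y)), N.sq (x ⊓ y) z]
  have A1 : N.ai x (N.ai y z ⊓ N.ai (y ⊓ N.an z) (N.an y)) =
      N.ai (x ⊓ y) z ⊓ N.ai (x ⊓ (y ⊓ N.an z)) (N.an y) := by
    rw [N.L1, ← N.curry, ← N.curry]
  have A2 : N.ai (x ⊓ N.an (N.ai y z ⊓ N.ai (y ⊓ N.an z) (N.an y))) (N.an x) =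
      N.ai ((x ⊓ y) ⊓ N.an z) (N.an x) := by
    rw [inf_comm x, N.curry, N.nm, N.M2, N.M1, N.M1, N.nn]
    have e1 : (y ⊓ N.an z) ⊓ y = y ⊓ N.an z := by
      rw [inf_comm (y ⊓ N.an z) y, ← inf_assoc, inf_idem]
    rw [e1, inf_idem, ← N.curry]
    have e2 : (y ⊓ N.an z) ⊓ x = (x ⊓ y) ⊓ N.an z := by
      rw [inf_comm _ x, ← inf_assoc]
    rw [e2]
  rw [A1, A2]
  have K1 : N.ai (x ⊓ (y ⊓ N.an z)) (N.an y) = N.ai ((x ⊓ y) ⊓ N.an z) (N.an ((x ⊓ y) ⊓ N.an z)) := by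
    have e3 : x ⊓ (y ⊓ N.an z) = y ⊓ (x ⊓ N.an z) := by
      rw [inf_left_comm]
    have e4 : y ⊓ (x ⊓ N.an z) = (x ⊓ y) ⊓ N.an z := by
      rw [← inf_assoc, inf_comm y x]
    rw [e3, N.Kk y (x ⊓ N.an z), e4]
  have K2 : N.ai ((x ⊓ y) ⊓ N.an z) (N.an x) = N.ai ((x ⊓ y) ⊓ N.an z) (N.an ((x ⊓ y) ⊓ N.an z)) := by
    have e5 : (x ⊓ y) ⊓ N.an z = x ⊓ (y ⊓ N.an z) := inf_assoc x y (N.an z)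
    rw [e5, N.Kk x (y ⊓ N.an z), ← e5]
  have K3 : N.ai ((x ⊓ y) ⊓ N.an z) (N.an (x ⊓ y)) = N.ai ((x ⊓ y) ⊓ N.an z) (N.an ((x ⊓ y) ⊓ N.an z)) :=
    N.Kk (x ⊓ y) (N.an z)
  rw [K1, K2, K3, inf_assoc, inf_idem]

end NelsonAlgebra

/-- The weak implication x↣y := (x→y)∧(∼y→∼x). -/
def NelsonAlgebra.wimp {A : Type*} (N : NelsonAlgebra A) (x y : A) : A :=
  N.meet (N.imp x y) (N.imp (N.neg y) (N.neg x))

theorem nelson_B6 {A : Type*} (N : NelsonAlgebra A) (x y z : A) :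
    N.wimp x (N.wimp x (N.wimp y (N.wimp y z))) =
      N.wimp (N.meet x y) (N.wimp (N.meet x y) z) :=
  N.main x y z
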